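/- Let R ∈ ℝ^{2n×2n} be symmetric and skew-Hamiltonian (JₙR = RJₙ) and let K ∈ ℂ^{m×2n} be of the passive form K = [M₁, iM₁, …, Mₙ, iMₙ]. Define A = 2Jₙ(R + Im(K†K)) and BBᵀ = 4Jₙ Re(K†K) Jₙᵀ. Then P = I_{2n} solves the Lyapunov equation AP + PAᵀ + BBᵀ = 0; that is, A + Aᵀ + BBᵀ = 0. -/

import Mathlib

open Matrix Kronecker Polynomial

/-- The 2×2 symplectic form matrix [[0,1],[-1,0]]. -/
noncomputable def Jb : Matrix (Fin 2) (Fin 2) ℝ := !![0, 1; -1, 0]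

/-- Jₙ = Iₙ ⊗ J₁, indexed by pairs (block index, position within block). -/
noncomputable def Jmat (n : ℕ) : Matrix (Fin n × Fin 2) (Fin n × Fin 2) ℝ :=
  (1 : Matrix (Fin n) (Fin n) ℝ) ⊗ₖ Jb

/-- Block-scalar diagonal matrix diag(σ₁I₂, …, σₙI₂). -/
noncomputable def SigmaD {n : ℕ} (σ : Fin n → ℝ) : Matrix (Fin n × Fin 2) (Fin n × Fin 2) ℝ :=
  Matrix.of fun p q => if p = q then σ p.1 else 0


lemma JT (n : ℕ) : (Jmat n)ᵀ = -(Jmat n) := by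
  ext ⟨j,s⟩ ⟨k,t⟩
  fin_cases s <;> fin_cases t <;>
    simp [Jmat, Jb, Matrix.one_apply, eq_comm]

lemma mulJ (n m : ℕ) (K : Matrix (Fin m) (Fin n × Fin 2) ℂ)
    (hK : ∀ (ℓ : Fin m) (j : Fin n), K ℓ (j, 1) = Complex.I * K ℓ (j, 0)) :
    Jmat n * ((K.map Complex.re)ᵀ * K.map Complex.re + (K.map Complex.im)ᵀ * K.map Complex.im)
    = ((K.map Complex.re)ᵀ * K.map Complex.im - (K.map Complex.im)ᵀ * K.map Complex.re) := by
  ext ⟨j,s⟩ q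
  simp only [mul_apply, Matrix.add_apply, Matrix.sub_apply, transpose_apply, map_apply, Fintype.sum_prod_type,
    Jmat, kroneckerMap_apply, Matrix.one_apply, ite_mul, one_mul, zero_mul]
  rw [Finset.sum_comm]; simp only [Finset.sum_ite_eq]
  simp only [Finset.mem_univ, if_true]
  fin_cases s <;>
  · simp [Jb, Fin.sum_univ_two, hK, Complex.mul_re, Complex.mul_im]
    ring

lemma Jmul (n m : ℕ) (K : Matrix (Fin m) (Fin n × Fin 2) ℂ)
    (hK : ∀ (ℓ : Fin m) (j : Fin n), K ℓ (j, 1) = Complex.I * K ℓ (j, 0)) :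
    ((K.map Complex.re)ᵀ * K.map Complex.re + (K.map Complex.im)ᵀ * K.map Complex.im) * Jmat n
    = ((K.map Complex.re)ᵀ * K.map Complex.im - (K.map Complex.im)ᵀ * K.map Complex.re) := by
  ext p ⟨k,t⟩
  simp only [mul_apply, Matrix.add_apply, Matrix.sub_apply, transpose_apply, map_apply, Fintype.sum_prod_type,
    Jmat, kroneckerMap_apply, Matrix.one_apply, ite_mul, one_mul, zero_mul, mul_ite, mul_zero]
  fin_cases t <;>
    (simp [Jb, Fin.sum_univ_two, hK, Complex.mul_re, Complex.mul_im]; try ring)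

theorem stmt9 (n m : ℕ) (R : Matrix (Fin n × Fin 2) (Fin n × Fin 2) ℝ) (hR : R.IsSymm)
    (hRsh : Jmat n * R = R * Jmat n)
    (K : Matrix (Fin m) (Fin n × Fin 2) ℂ)
    (hK : ∀ (ℓ : Fin m) (j : Fin n), K ℓ (j, 1) = Complex.I * K ℓ (j, 0))
    (A BBt : Matrix (Fin n × Fin 2) (Fin n × Fin 2) ℝ)
    (hA : A = (2 : ℝ) • (Jmat n *
        (R + ((K.map Complex.re)ᵀ * K.map Complex.im - (K.map Complex.im)ᵀ * K.map Complex.re))))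
    (hB : BBt = (4 : ℝ) • (Jmat n *
        ((K.map Complex.re)ᵀ * K.map Complex.re + (K.map Complex.im)ᵀ * K.map Complex.im) * (Jmat n)ᵀ)) :
    A + Aᵀ + BBt = 0 := by
  subst hA hB
  set J := Jmat n with hJ
  set G := (K.map Complex.re)ᵀ * K.map Complex.re + (K.map Complex.im)ᵀ * K.map Complex.im with hGdef
  set S := (K.map Complex.re)ᵀ * K.map Complex.im - (K.map Complex.im)ᵀ * K.map Complex.re with hSdef
  have h1 : J * G = S := mulJ n m K hK
  have h2 : G * J = S := Jmul n m K hK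
  have h3 : Jᵀ = -J := JT n
  have hGt : Gᵀ = G := by
    rw [hGdef, transpose_add, transpose_mul, transpose_mul, transpose_transpose,
      transpose_transpose]
  have hSt : Sᵀ = -S := by
    nth_rewrite 1 [← h2]
    rw [transpose_mul, h3, hGt, neg_mul, h1]
  have hJS : J * S = S * J := by
    conv_lhs => rw [← h2]
    rw [← mul_assoc, h1]
  rw [transpose_smul, transpose_mul, transpose_add, hR.eq, hSt, h3, h1, mul_add, hRsh, hJS]
  simp only [add_mul, neg_mul, mul_neg, neg_neg, smul_add, smul_neg]
  module
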